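/- If the reference contravariant metric ā^{αβ} is positive definite and 0 ≤ ν < 1, then the quadratic form ε ↦ H^{αβλδ} ε_{αβ} ε_{λδ} (Einstein summation over α,β,λ,δ ∈ {1,2}) is nonnegative on symmetric 2×2 tensors ε, and it is positive definite when additionally ν ≥ 0. -/

import Mathlib

open scoped BigOperators

/-- The elasticity tensor of the Kirchhoff-Love shell. -/
noncomputable def elasticityTensor (A : Matrix (Fin 2) (Fin 2) ℝ) (ν : ℝ) (α β l d : Fin 2) : ℝ :=
  ν * A α β * A l d + (1 / 2) * (1 - ν) * (A α l * A β d + A α d * A β l)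

/-- The quadratic form `ε ↦ H^{αβλδ} ε_{αβ} ε_{λδ}` (Einstein summation). -/
noncomputable def elasticityQuadForm (A : Matrix (Fin 2) (Fin 2) ℝ) (ν : ℝ)
    (ε : Matrix (Fin 2) (Fin 2) ℝ) : ℝ :=
  ∑ α, ∑ β, ∑ l, ∑ d, elasticityTensor A ν α β l d * ε α β * ε l d

private lemma elasticity_aux (a b c x y z ν : ℝ) (ha0 : 0 < a) (hd : 0 < a * c - b ^ 2)
    (hν0 : 0 ≤ ν) (hν1 : ν < 1) :
    0 ≤ ν * (a*x + 2*b*y + c*z)^2 +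
      (1 - ν) * ((a*x + b*y)^2 + (b*y + c*z)^2 + 2*(a*y + b*z)*(b*x + c*y)) ∧
    (¬(x = 0 ∧ y = 0 ∧ z = 0) → 0 < ν * (a*x + 2*b*y + c*z)^2 +
      (1 - ν) * ((a*x + b*y)^2 + (b*y + c*z)^2 + 2*(a*y + b*z)*(b*x + c*y))) := by
  set Q := ν * (a*x + 2*b*y + c*z)^2 +
      (1 - ν) * ((a*x + b*y)^2 + (b*y + c*z)^2 + 2*(a*y + b*z)*(b*x + c*y)) with hQ
  set d := a * c - b ^ 2 with hdd
  have h1ν : 0 < 1 - ν := by linarith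
  have hQa : a^2 * Q = ν * a^2 * (a*x + 2*b*y + c*z)^2 +
      ((1 - ν) * (a^2*x + 2*a*b*y + b^2*z)^2 + (1 - ν) * (2*d*(a*y + b*z)^2) +
       (1 - ν) * (d^2*z^2)) := by
    rw [hQ, hdd]; ring
  have t1 : 0 ≤ ν * a^2 * (a*x + 2*b*y + c*z)^2 :=
    mul_nonneg (mul_nonneg hν0 (sq_nonneg a)) (sq_nonneg _)
  have t2 : 0 ≤ (1 - ν) * (a^2*x + 2*a*b*y + b^2*z)^2 := mul_nonneg h1ν.le (sq_nonneg _)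
  have t3 : 0 ≤ (1 - ν) * (2*d*(a*y + b*z)^2) :=
    mul_nonneg h1ν.le (mul_nonneg (by linarith) (sq_nonneg _))
  have t4 : 0 ≤ (1 - ν) * (d^2*z^2) :=
    mul_nonneg h1ν.le (mul_nonneg (sq_nonneg _) (sq_nonneg _))
  have ha2 : 0 < a^2 := by positivity
  have hnn : 0 ≤ a^2 * Q := by rw [hQa]; linarith [t1, t2, t3, t4]
  refine ⟨?_, ?_⟩
  · by_contra h
    push_neg at h
    exact absurd hnn (not_le.mpr (mul_neg_of_pos_of_neg ha2 h))
  · intro hxyz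
    have hpos : 0 < a^2 * Q := by
      rw [hQa]
      rcases eq_or_ne z 0 with hz0 | hz0
      · rcases eq_or_ne y 0 with hy0 | hy0
        · have hx0 : x ≠ 0 := by tauto
          subst hz0 hy0
          have s2 : 0 < (1 - ν) * (a^2*x + 2*a*b*0 + b^2*0)^2 := by
            have h2 : a^2*x + 2*a*b*0 + b^2*0 = a^2*x := by ring
            rw [h2]
            have hax : a^2*x ≠ 0 := mul_ne_zero ha2.ne' hx0
            exact mul_pos h1ν (pow_two_pos_of_ne_zero hax)
          linarith [t1, s2, t3, t4]
        · subst hz0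
          have hay : a*y + b*0 ≠ 0 := by
            rw [mul_zero, add_zero]; exact mul_ne_zero ha0.ne' hy0
          have s3 : 0 < (1 - ν) * (2*d*(a*y + b*0)^2) :=
            mul_pos h1ν (mul_pos (by linarith) (pow_two_pos_of_ne_zero hay))
          linarith [t1, t2, s3, t4]
      · have s4 : 0 < (1 - ν) * (d^2*z^2) :=
          mul_pos h1ν (mul_pos (pow_two_pos_of_ne_zero hd.ne') (pow_two_pos_of_ne_zero hz0))
        linarith [t1, t2, t3, s4]
    by_contra h
    push_neg at h
    exact absurd hpos (not_lt.mpr (mul_nonpos_of_nonneg_of_nonpos ha2.le h))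

/-- if `[ā^{αβ}]` is positive definite and `0 ≤ ν < 1`, the quadratic form
induced by `H` is nonnegative on symmetric 2×2 tensors, and positive definite. -/
theorem elasticityQuadForm_posDef
    (A : Matrix (Fin 2) (Fin 2) ℝ) (hA : A.PosDef)
    (ν : ℝ) (hν0 : 0 ≤ ν) (hν1 : ν < 1)
    (ε : Matrix (Fin 2) (Fin 2) ℝ) (hεsymm : ∀ α β, ε α β = ε β α) :
    0 ≤ elasticityQuadForm A ν ε ∧ (ε ≠ 0 → 0 < elasticityQuadForm A ν ε) := by
  have hAsymm : A 1 0 = A 0 1 := by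
    have h := hA.1
    rw [Matrix.IsHermitian] at h
    have := congrFun (congrFun h 1) 0
    simpa [Matrix.conjTranspose_apply] using this.symm
  have hεs : ε 1 0 = ε 0 1 := hεsymm 1 0
  have ha0 : 0 < A 0 0 := by
    have h := hA.dotProduct_mulVec_pos (x := ![1, 0]) (by simp [funext_iff, Fin.forall_fin_two])
    simpa [dotProduct, Matrix.mulVec, Fin.sum_univ_two] using h
  have hd : 0 < A 0 0 * A 1 1 - A 0 1 ^ 2 := by
    have := hA.det_pos
    rw [Matrix.det_fin_two, hAsymm] at this
    nlinarith [this]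
  have key : elasticityQuadForm A ν ε =
      ν * (A 0 0 * ε 0 0 + 2 * A 0 1 * ε 0 1 + A 1 1 * ε 1 1)^2 +
      (1 - ν) * ((A 0 0 * ε 0 0 + A 0 1 * ε 0 1)^2 + (A 0 1 * ε 0 1 + A 1 1 * ε 1 1)^2 +
        2*(A 0 0 * ε 0 1 + A 0 1 * ε 1 1)*(A 0 1 * ε 0 0 + A 1 1 * ε 0 1)) := by
    simp [elasticityQuadForm, elasticityTensor, Fin.sum_univ_two, hAsymm, hεs]
    ring
  obtain ⟨h1, h2⟩ := elasticity_aux (A 0 0) (A 0 1) (A 1 1) (ε 0 0) (ε 0 1) (ε 1 1) ν ha0 hd hν0 hν1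
  rw [key]
  refine ⟨h1, fun hne => h2 ?_⟩
  rintro ⟨e1, e2, e3⟩
  apply hne
  ext i j
  fin_cases i <;> fin_cases j <;> simp only [Matrix.zero_apply] <;>
    first | exact e1 | exact e2 | exact hεs.trans e2 | exact e3
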